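/- Let 0 < ε < 1/2 and 0 < r ≤ 1. Then for all y ∈ [1/2, 1] with y + ε < 1 and y − ε > 0, M_B(y + ε − rε, y + ε) ≤ M_B(y − ε + rε, y − ε). -/

import Mathlib

noncomputable def MB (z θ : ℝ) : ℝ :=
  z * Real.log (θ / z) + (1 - z) * Real.log ((1 - θ) / (1 - z))

private lemma MB_eq (z θ : ℝ) (hz : 0 < z) (hz1 : z < 1) (hθ : 0 < θ) (hθ1 : θ < 1) :
    MB z θ = z * (Real.log θ - Real.log z) + (1 - z) * (Real.log (1 - θ) - Real.log (1 - z)) := by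
  unfold MB
  rw [Real.log_div (ne_of_gt hθ) (ne_of_gt hz),
      Real.log_div (by linarith : (1:ℝ) - θ ≠ 0) (by linarith : (1:ℝ) - z ≠ 0)]

private lemma hda_plus (c A d : ℝ) (h : c + d ≠ 0) :
    HasDerivAt (fun x => (c + x) * (A - Real.log (c + x))) (A - Real.log (c + d) - 1) d := by
  have h1 : HasDerivAt (fun x : ℝ => c + x) 1 d := (hasDerivAt_id d).const_add c
  have h2 : HasDerivAt (fun x : ℝ => Real.log (c + x)) (1 / (c + d)) d := by
    simpa using h1.log h
  have h3 := (hasDerivAt_const d A).sub h2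
  have := h1.mul h3
  convert this using 1
  all_goals try rfl
  simp only [Pi.sub_apply]
  field_simp
  ring

private lemma hda_minus (c A d : ℝ) (h : c - d ≠ 0) :
    HasDerivAt (fun x => (c - x) * (A - Real.log (c - x))) (-(A - Real.log (c - d)) + 1) d := by
  have h1 : HasDerivAt (fun x : ℝ => c - x) (-1) d := by
    simpa using ((hasDerivAt_id d).const_sub c)
  have h2 : HasDerivAt (fun x : ℝ => Real.log (c - x)) (-1 / (c - d)) d := by
    simpa using h1.log h
  have h3 := (hasDerivAt_const d A).sub h2
  have := h1.mul h3
  convert this using 1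
  all_goals try rfl
  simp only [Pi.sub_apply]
  field_simp
  ring

/-- For `0 < ε < 1/2`, `0 < r ≤ 1`, and `y ∈ [1/2, 1]` with `y + ε < 1` and
`y − ε > 0`:  `M_B(y + ε − rε, y + ε) ≤ M_B(y − ε + rε, y − ε)`. -/
theorem mb_upper_le_lower (ε r y : ℝ) (hε0 : 0 < ε) (hε : ε < 1 / 2)
    (hr0 : 0 < r) (hr1 : r ≤ 1) (hy : 1 / 2 ≤ y) (hy1 : y ≤ 1)
    (hyε : y + ε < 1) (hyε' : 0 < y - ε) :
    MB (y + ε - r * ε) (y + ε) ≤ MB (y - ε + r * ε) (y - ε) := by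
  have hrε : 0 < r * ε := mul_pos hr0 hε0
  have hrεε : r * ε ≤ ε := by nlinarith
  have hy0 : 0 < y := by linarith
  have hy1' : y < 1 := by linarith
  set F : ℝ → ℝ := fun d =>
      (y - ε + d) * (Real.log (y - ε) - Real.log (y - ε + d)) +
      ((1 - y + ε) - d) * (Real.log (1 - y + ε) - Real.log ((1 - y + ε) - d)) -
      ((y + ε) - d) * (Real.log (y + ε) - Real.log ((y + ε) - d)) -
      ((1 - y - ε) + d) * (Real.log (1 - y - ε) - Real.log ((1 - y - ε) + d)) with hFdef
  set G : ℝ → ℝ := fun d =>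
      Real.log (y - ε) + Real.log (y + ε) + Real.log ((1 - y + ε) - d)
        + Real.log ((1 - y - ε) + d)
      - Real.log (y - ε + d) - Real.log ((y + ε) - d) - Real.log (1 - y + ε)
        - Real.log (1 - y - ε) with hGdef
  -- positivity facts on Icc 0 (r*ε)
  have hderiv : ∀ d ∈ Set.Icc (0:ℝ) (r * ε), HasDerivAt F (G d) d := by
    intro d hd
    obtain ⟨hd0, hd1⟩ := hd
    have a1 : (0:ℝ) < y - ε + d := by linarith
    have a2 : (0:ℝ) < (1 - y + ε) - d := by linarith
    have a3 : (0:ℝ) < (y + ε) - d := by linarith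
    have a4 : (0:ℝ) < (1 - y - ε) + d := by linarith
    have t1 := hda_plus (y - ε) (Real.log (y - ε)) d (ne_of_gt a1)
    have t2 := hda_minus (1 - y + ε) (Real.log (1 - y + ε)) d (ne_of_gt a2)
    have t3 := hda_minus (y + ε) (Real.log (y + ε)) d (ne_of_gt a3)
    have t4 := hda_plus (1 - y - ε) (Real.log (1 - y - ε)) d (ne_of_gt a4)
    have := ((t1.add t2).sub t3).sub t4
    convert this using 1
    all_goals try rfl
    simp only [hGdef]
    ring
  have hGnonneg : ∀ d ∈ Set.Icc (0:ℝ) (r * ε), 0 ≤ G d := by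
    intro d hd
    obtain ⟨hd0, hd1⟩ := hd
    have a1 : (0:ℝ) < y - ε + d := by linarith
    have a2 : (0:ℝ) < (1 - y + ε) - d := by linarith
    have a3 : (0:ℝ) < (y + ε) - d := by linarith
    have a4 : (0:ℝ) < (1 - y - ε) + d := by linarith
    have b1 : (0:ℝ) < y - ε := hyε'
    have b2 : (0:ℝ) < y + ε := by linarith
    have b3 : (0:ℝ) < 1 - y + ε := by linarith
    have b4 : (0:ℝ) < 1 - y - ε := by linarith
    have hP1 : (0:ℝ) < (y - ε) * (y + ε) * ((1 - y + ε) - d) * ((1 - y - ε) + d) := by positivity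
    have hP2 : (0:ℝ) < (y - ε + d) * ((y + ε) - d) * (1 - y + ε) * (1 - y - ε) := by positivity
    have key : (y - ε + d) * ((y + ε) - d) * (1 - y + ε) * (1 - y - ε)
        ≤ (y - ε) * (y + ε) * ((1 - y + ε) - d) * ((1 - y - ε) + d) := by
      have hid : (y - ε) * (y + ε) * ((1 - y + ε) - d) * ((1 - y - ε) + d)
          - (y - ε + d) * ((y + ε) - d) * (1 - y + ε) * (1 - y - ε)
          = d * (2 * ε - d) * (2 * y - 1) := by ring
      nlinarith [mul_nonneg (mul_nonneg hd0 (by linarith : (0:ℝ) ≤ 2 * ε - d))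
        (by linarith : (0:ℝ) ≤ 2 * y - 1)]
    have hlog := Real.log_le_log hP2 key
    rw [Real.log_mul (by positivity) (ne_of_gt a4), Real.log_mul (by positivity) (ne_of_gt a2),
        Real.log_mul (ne_of_gt b1) (ne_of_gt b2)] at hlog
    rw [Real.log_mul (by positivity) (ne_of_gt b4), Real.log_mul (by positivity) (ne_of_gt b3),
        Real.log_mul (ne_of_gt a1) (ne_of_gt a3)] at hlog
    simp only [hGdef]
    linarith
  have hmono : MonotoneOn F (Set.Icc (0:ℝ) (r * ε)) := by
    apply monotoneOn_of_deriv_nonneg (convex_Icc _ _)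
    · exact fun x hx => (hderiv x hx).continuousAt.continuousWithinAt
    · intro x hx
      rw [interior_Icc] at hx
      exact (hderiv x (Set.mem_Icc_of_Ioo hx)).differentiableAt.differentiableWithinAt
    · intro x hx
      rw [interior_Icc] at hx
      rw [(hderiv x (Set.mem_Icc_of_Ioo hx)).deriv]
      exact hGnonneg x (Set.mem_Icc_of_Ioo hx)
  have hF0 : F 0 = 0 := by simp [hFdef]
  have hFle : F 0 ≤ F (r * ε) :=
    hmono (Set.left_mem_Icc.mpr (le_of_lt hrε)) (Set.right_mem_Icc.mpr (le_of_lt hrε))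
      (le_of_lt hrε)
  have hFr : 0 ≤ F (r * ε) := hF0 ▸ hFle
  rw [MB_eq _ _ (by linarith) (by linarith) (by linarith) (by linarith),
      MB_eq _ _ (by linarith) (by linarith) hyε' (by linarith), ← sub_nonneg]
  simp only [hFdef] at hFr
  have e1 : (1:ℝ) - (y - ε + r * ε) = (1 - y + ε) - r * ε := by ring
  have e2 : (1:ℝ) - (y + ε - r * ε) = (1 - y - ε) + r * ε := by ring
  have e3 : y + ε - r * ε = (y + ε) - r * ε := by ring
  rw [e1, e2, e3]
  have e4 : (1:ℝ) - (y - ε) = 1 - y + ε := by ring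
  have e5 : (1:ℝ) - (y + ε) = 1 - y - ε := by ring
  rw [e4, e5]
  linarith
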